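/- Let G=(V,E) be a finite connected undirected graph with edge costs w : E → ℝ≥0, let r, t_1, …, t_k be distinct vertices, and consider the f-SAND instance with root r and singleton colors C_i = {t_i} for i ∈ [k]. Then the minimum cost of a feasible capacity installation equals the minimum total edge weight of a connected subgraph of G containing all of r, t_1, …, t_k (i.e., the minimum Steiner tree cost for terminals {r, t_1, …, t_k}). -/

import Mathlib

open scoped Classical
open Finset

namespace FSand

variable {V : Type} [Fintype V] [DecidableEq V]

/-- An edge crosses the cut `(S, Sᶜ)`. -/
def Crossing (S : Finset V) (e : Sym2 V) : Prop :=
  ∃ u v, e = s(u, v) ∧ u ∈ S ∧ v ∉ S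

/-- Total capacity installed on edges crossing the cut `(S, Sᶜ)`. -/
noncomputable def cutCap (x : Sym2 V → ℕ) (S : Finset V) : ℕ :=
  ∑ e ∈ Finset.univ.filter (Crossing S), x e

/-- Feasibility of a capacity installation for the f-SAND instance `(G, r, C)`. -/
def Feasible {ι : Type} (G : SimpleGraph V) (r : V) (C : ι → Finset V)
    (x : Sym2 V → ℕ) : Prop :=
  (∀ e, e ∉ G.edgeSet → x e = 0) ∧
  ∀ S : Finset V, r ∉ S → ∀ i : ι, (C i ∩ S).card ≤ cutCap x S

/-- Cost of a capacity installation. -/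
noncomputable def instCost (w : Sym2 V → ℝ) (x : Sym2 V → ℕ) : ℝ :=
  ∑ e : Sym2 V, w e * (x e : ℝ)

/-- Total weight of the edges of a subgraph. -/
noncomputable def subgraphCost (G : SimpleGraph V) (w : Sym2 V → ℝ) (H : G.Subgraph) : ℝ :=
  ∑ e ∈ Finset.univ.filter (· ∈ H.edgeSet), w e

/-- Minimum weight of a connected subgraph of `G` containing all vertices of `T`. -/
noncomputable def steinerCost (G : SimpleGraph V) (w : Sym2 V → ℝ) (T : Set V) : ℝ :=
  sInf {c | ∃ H : G.Subgraph, H.Connected ∧ T ⊆ H.verts ∧ c = subgraphCost G w H}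

/-- Optimal value of the f-SAND instance. -/
noncomputable def OPT {ι : Type} (G : SimpleGraph V) (r : V) (C : ι → Finset V)
    (w : Sym2 V → ℝ) : ℝ :=
  sInf {c | ∃ x : Sym2 V → ℕ, Feasible G r C x ∧ instCost w x = c}

end FSand

namespace FSandAux

open FSand

variable {V : Type} [Fintype V] [DecidableEq V]

set_option linter.unusedSectionVars false

/-- The support graph of a capacity installation. -/
def supp (G : SimpleGraph V) (x : Sym2 V → ℕ) : SimpleGraph V where
  Adj u v := G.Adj u v ∧ x s(u, v) ≠ 0
  symm := ⟨by rintro u v ⟨h1, h2⟩; exact ⟨h1.symm, by rwa [Sym2.eq_swap]⟩⟩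
  loopless := ⟨fun v h => G.loopless.irrefl v h.1⟩

/-- The subgraph of `G` formed by the component of `r` in the support graph. -/
def reachSub (G : SimpleGraph V) (x : Sym2 V → ℕ) (r : V) : G.Subgraph where
  verts := {v | (supp G x).Reachable r v}
  Adj u v := (supp G x).Adj u v ∧ (supp G x).Reachable r u
  adj_sub h := (show G.Adj _ _ ∧ _ from h.1).1
  edge_vert h := h.2
  symm := ⟨by rintro u v ⟨hadj, hru⟩; exact ⟨hadj.symm, hru.trans hadj.reachable⟩⟩

lemma reachSub_lift {G : SimpleGraph V} {x : Sym2 V → ℕ} {r : V} :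
    ∀ {u v : V} (p : (supp G x).Walk u v) (hu : (supp G x).Reachable r u),
      (reachSub G x r).coe.Reachable ⟨u, hu⟩ ⟨v, hu.trans p.reachable⟩ := by
  intro u v p
  induction p with
  | nil => exact fun _ => SimpleGraph.Reachable.refl _
  | @cons a c v h p ih =>
    intro hu
    have h1 : (reachSub G x r).coe.Adj ⟨a, hu⟩ ⟨c, hu.trans h.reachable⟩ := ⟨h, hu⟩
    exact h1.reachable.trans (ih (hu.trans h.reachable))

lemma reachSub_connected {G : SimpleGraph V} {x : Sym2 V → ℕ} {r : V} :
    (reachSub G x r).Connected := by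
  rw [SimpleGraph.Subgraph.connected_iff]
  constructor
  · constructor
    rintro ⟨u, hu⟩ ⟨v, hv⟩
    obtain ⟨p⟩ := hu
    obtain ⟨q⟩ := hv
    have h1 := reachSub_lift p (SimpleGraph.Reachable.refl r)
    have h2 := reachSub_lift q (SimpleGraph.Reachable.refl r)
    exact h1.symm.trans h2
  · exact ⟨r, SimpleGraph.Reachable.refl r⟩

lemma walk_cross {G : SimpleGraph V} {H : G.Subgraph} (S : Finset V) :
    ∀ {a b : H.verts} (_ : H.coe.Walk a b), (a : V) ∈ S → (b : V) ∉ S →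
      ∃ u v : V, H.Adj u v ∧ u ∈ S ∧ v ∉ S
  | _, _, SimpleGraph.Walk.nil, h1, h2 => absurd h1 h2
  | a, _, SimpleGraph.Walk.cons (v := c) h p, h1, h2 =>
    if hc : (c : V) ∈ S then walk_cross S p hc h2
    else ⟨a, c, h, h1, hc⟩

lemma crossing_of (S : Finset V) {u v : V} (hu : u ∈ S) (hv : v ∉ S) :
    Crossing S s(u, v) := ⟨u, v, rfl, hu, hv⟩

/-- Every terminal is in the component of the root. -/
lemma reachSub_terminals {G : SimpleGraph V} {r : V} {k : ℕ} {t : Fin k → V}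
    {x : Sym2 V → ℕ} (hx : Feasible G r (fun i : Fin k => {t i}) x) :
    (insert r (Set.range t) : Set V) ⊆ (reachSub G x r).verts := by
  rintro v (rfl | ⟨i, rfl⟩)
  · exact SimpleGraph.Reachable.refl _
  · by_contra hre
    set S : Finset V := Finset.univ.filter (fun v => (supp G x).Reachable (t i) v) with hS
    have htS : t i ∈ S := by
      simp only [hS, Finset.mem_filter]
      exact ⟨Finset.mem_univ _, SimpleGraph.Reachable.refl _⟩
    have hrS : r ∉ S := by
      simp only [hS, Finset.mem_filter, Finset.mem_univ, true_and]
      exact fun h => hre h.symm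
    have hcard : ({t i} ∩ S).card = 1 := by
      rw [Finset.singleton_inter_of_mem htS]; simp
    have hfe := hx.2 S hrS i
    simp only [hcard] at hfe
    have hpos : 0 < cutCap x S := lt_of_lt_of_le one_pos hfe
    obtain ⟨e, he, hxe⟩ := Finset.exists_ne_zero_of_sum_ne_zero (by omega : cutCap x S ≠ 0)
    rw [Finset.mem_filter] at he
    obtain ⟨u, v, rfl, huS, hvS⟩ := he.2
    have hGe : s(u, v) ∈ G.edgeSet := by
      by_contra hne
      exact hxe (hx.1 _ hne)
    have hadj : (supp G x).Adj u v := show G.Adj u v ∧ _ from ⟨hGe, hxe⟩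
    rw [hS, Finset.mem_filter] at huS
    exact hvS (by simp [hS, huS.2.trans hadj.reachable])

lemma reachSub_cost {G : SimpleGraph V} {w : Sym2 V → ℝ} (hw : ∀ e, 0 ≤ w e)
    {r : V} {x : Sym2 V → ℕ} :
    subgraphCost G w (reachSub G x r) ≤ instCost w x := by
  rw [subgraphCost, instCost, Finset.sum_filter]
  refine Finset.sum_le_sum fun e _ => ?_
  by_cases he : e ∈ (reachSub G x r).edgeSet
  · rw [if_pos he]
    have hxe : x e ≠ 0 := by
      induction e using Sym2.ind with
      | _ u v =>
        rw [SimpleGraph.Subgraph.mem_edgeSet] at he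
        exact (show G.Adj u v ∧ x s(u, v) ≠ 0 from he.1).2
    have h1 : (1 : ℝ) ≤ (x e : ℝ) := by exact_mod_cast Nat.one_le_iff_ne_zero.mpr hxe
    calc w e = w e * 1 := by ring
    _ ≤ w e * (x e : ℝ) := by
        exact mul_le_mul_of_nonneg_left h1 (hw e)
  · rw [if_neg he]
    exact mul_nonneg (hw e) (by positivity)

/-- From a connected subgraph containing the terminals, get a feasible installation of
equal cost. -/
lemma subgraph_to_feasible {G : SimpleGraph V} {w : Sym2 V → ℝ}
    {r : V} {k : ℕ} {t : Fin k → V} {H : G.Subgraph}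
    (hconn : H.Connected) (hT : (insert r (Set.range t) : Set V) ⊆ H.verts) :
    ∃ x : Sym2 V → ℕ, Feasible G r (fun i : Fin k => {t i}) x ∧
      instCost w x = subgraphCost G w H := by
  refine ⟨fun e => if e ∈ H.edgeSet then 1 else 0, ⟨?_, ?_⟩, ?_⟩
  · intro e he
    exact if_neg (fun h => he (H.edgeSet_subset h))
  · intro S hrS i
    by_cases htS : t i ∈ S
    · have hcard : ({t i} ∩ S).card = 1 := by
        rw [Finset.singleton_inter_of_mem htS]; simp
      rw [hcard]
      have hrv : r ∈ H.verts := hT (Set.mem_insert r _)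
      have htv : t i ∈ H.verts := hT (Set.mem_insert_of_mem _ ⟨i, rfl⟩)
      obtain ⟨p⟩ := hconn ⟨t i, htv⟩ ⟨r, hrv⟩
      obtain ⟨u, v, hadj, huS, hvS⟩ := walk_cross S p htS hrS
      have hmem : s(u, v) ∈ Finset.univ.filter (Crossing S) :=
        Finset.mem_filter.mpr ⟨Finset.mem_univ _, crossing_of S huS hvS⟩
      have hle := Finset.single_le_sum (f := fun e : Sym2 V => if e ∈ H.edgeSet then 1 else 0)
        (fun _ _ => Nat.zero_le _) hmem
      simp only [if_pos (SimpleGraph.Subgraph.mem_edgeSet.mpr hadj)] at hle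
      exact hle
    · have hcard : ({t i} ∩ S) = ∅ := by
        rw [Finset.singleton_inter_of_notMem htS]
      rw [hcard]
      simp
  · rw [instCost, subgraphCost, Finset.sum_filter]
    refine Finset.sum_congr rfl fun e _ => ?_
    by_cases he : e ∈ H.edgeSet <;> simp [he]

lemma top_verts_subset (G : SimpleGraph V) (T : Set V) : T ⊆ (⊤ : G.Subgraph).verts := by
  simp

lemma top_connected {G : SimpleGraph V} (hG : G.Connected) : (⊤ : G.Subgraph).Connected :=
  ⟨(SimpleGraph.Subgraph.topIso (G := G)).connected_iff.mpr hG⟩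

end FSandAux


set_option linter.unusedVariables false in
open FSand in
/-- for singleton colors `C_i = {t_i}`, the minimum cost of a feasible
installation equals the minimum Steiner tree cost for the terminals `{r, t_1, …, t_k}`. -/
theorem stmt_14 {V : Type} [Fintype V] [DecidableEq V]
    (G : SimpleGraph V) (hGconn : G.Connected)
    (w : Sym2 V → ℝ) (hw : ∀ e, 0 ≤ w e)
    (r : V) (k : ℕ) (t : Fin k → V)
    (ht : Function.Injective t) (htr : ∀ i, t i ≠ r) :
    sInf {c | ∃ x : Sym2 V → ℕ,
        Feasible G r (fun i : Fin k => {t i}) x ∧ instCost w x = c} =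
      steinerCost G w (insert r (Set.range t)) := by
  set A := {c | ∃ x : Sym2 V → ℕ,
      Feasible G r (fun i : Fin k => {t i}) x ∧ instCost w x = c} with hA
  set B := {c | ∃ H : G.Subgraph, H.Connected ∧ (insert r (Set.range t) : Set V) ⊆ H.verts ∧
      c = subgraphCost G w H} with hB
  have hBne : B.Nonempty :=
    ⟨subgraphCost G w ⊤, ⊤, FSandAux.top_connected hGconn, FSandAux.top_verts_subset G _, rfl⟩
  have hAne : A.Nonempty := by
    obtain ⟨x, hfeas, hcost⟩ := FSandAux.subgraph_to_feasible (w := w)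
      (FSandAux.top_connected hGconn) (FSandAux.top_verts_subset G (insert r (Set.range t)))
    exact ⟨instCost w x, x, hfeas, rfl⟩
  have hAbdd : BddBelow A := by
    refine ⟨0, ?_⟩
    rintro c ⟨x, _, rfl⟩
    exact Finset.sum_nonneg fun e _ => mul_nonneg (hw e) (by positivity)
  have hBbdd : BddBelow B := by
    refine ⟨0, ?_⟩
    rintro c ⟨H, _, _, rfl⟩
    exact Finset.sum_nonneg fun e _ => hw e
  rw [steinerCost]
  refine le_antisymm ?_ ?_
  · refine le_csInf hBne ?_
    rintro b ⟨H, hconn, hT, rfl⟩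
    obtain ⟨x, hfeas, hcost⟩ := FSandAux.subgraph_to_feasible (w := w) hconn hT
    exact csInf_le hAbdd ⟨x, hfeas, hcost⟩
  · refine le_csInf hAne ?_
    rintro a ⟨x, hfeas, rfl⟩
    exact le_trans
      (csInf_le hBbdd ⟨FSandAux.reachSub G x r, FSandAux.reachSub_connected, FSandAux.reachSub_terminals hfeas, rfl⟩)
      (FSandAux.reachSub_cost hw)
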